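/- Assume v : ℝ≥0 → ℝ is C¹ with v' < 0 on (0,∞) and ρ ↦ ρ v'(ρ) non-increasing on ℝ≥0. Let x₁ < ... < x_{n−1} solve the follow-the-leader system with ẋᵢ = v(ℓ/(x_{i+1}−xᵢ)) for i ≤ n−2 and ẋ_{n−1} = v(0). Then for all t > 0 and all i ∈ {1,...,n−2}: (ẋ_{i+1}(t) − ẋᵢ(t))/(x_{i+1}(t) − xᵢ(t)) ≤ 1/t (discrete Oleinik inequality). -/

import Mathlib

open Set

/-- Comparison lemma: if `z` is differentiable on `(0,∞)`, continuous at `0`,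
and satisfies `Z ≤ -z²` wherever `z t ≥ 1/t`, then `z t ≤ 1/t` for `t > 0`. -/
lemma oleinik_comp (z Z : ℝ → ℝ)
    (hz : ∀ t > (0:ℝ), HasDerivAt z (Z t) t)
    (hz0 : ContinuousAt z 0)
    (hkey : ∀ t > (0:ℝ), 1/t ≤ z t → Z t ≤ -(z t)^2) :
    ∀ t > (0:ℝ), z t ≤ 1/t := by
  intro t₀ ht₀
  refine le_of_forall_pos_le_add ?_
  intro c hc
  -- choose small ε with z ε ≤ 1/ε
  obtain ⟨δ, hδ, hδ'⟩ := Metric.continuousAt_iff.mp hz0 1 one_pos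
  set C : ℝ := |z 0| + 1 with hC
  have hCpos : 0 < C := by positivity
  set ε : ℝ := min (min (δ/2) t₀) (1/C) with hε
  have hεpos : 0 < ε := by
    apply lt_min (lt_min (by linarith) ht₀) (by positivity)
  have hεt₀ : ε ≤ t₀ := le_trans (min_le_left _ _) (min_le_right _ _)
  have hzε : z ε ≤ 1/ε := by
    have h1 : dist ε 0 < δ := by
      rw [Real.dist_eq, sub_zero, abs_of_pos hεpos]
      have : ε ≤ δ/2 := le_trans (min_le_left _ _) (min_le_left _ _)
      linarith
    have h2 : |z ε - z 0| < 1 := by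
      have := hδ' h1
      rwa [Real.dist_eq] at this
    have h3 : z ε ≤ C := by
      have := abs_sub_lt_iff.mp h2
      have h4 : z 0 ≤ |z 0| := le_abs_self _
      linarith [this.1]
    have h5 : ε ≤ 1/C := min_le_right _ _
    have h6 : C ≤ 1/ε := by
      rw [le_one_div hεpos hCpos] at *
      · exact h5
    linarith
  -- fencing against B t = 1/t + c
  have main : ∀ ⦃s⦄, s ∈ Icc ε t₀ → z s ≤ 1/s + c := by
    refine image_le_of_deriv_right_lt_deriv_boundary'
      (f' := Z) (B := fun s => 1/s + c) (B' := fun s => -(1/s^2))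
      ?_ ?_ ?_ ?_ ?_ ?_
    · intro s hs
      exact ((hz s (lt_of_lt_of_le hεpos hs.1)).continuousAt).continuousWithinAt
    · intro s hs
      exact (hz s (lt_of_lt_of_le hεpos hs.1)).hasDerivWithinAt
    · have : (0:ℝ) < c := hc
      linarith
    · intro s hs
      have hs0 : 0 < s := lt_of_lt_of_le hεpos hs.1
      exact (ContinuousAt.continuousWithinAt (by
        exact (continuousAt_const.div continuousAt_id hs0.ne').add continuousAt_const))
    · intro s hs
      have hs0 : 0 < s := lt_of_lt_of_le hεpos hs.1
      have : HasDerivAt (fun s : ℝ => 1/s + c) (-(1/s^2)) s := by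
        have h := (hasDerivAt_inv hs0.ne').add_const c
        simpa [one_div] using h
      exact this.hasDerivWithinAt
    · intro s hs heq
      have hs0 : 0 < s := lt_of_lt_of_le hεpos hs.1
      have h1 : 1/s ≤ z s := by rw [heq]; linarith
      have h2 := hkey s hs0 h1
      have h3 : (0:ℝ) < 1/s := by positivity
      calc Z s ≤ -(z s)^2 := h2
        _ < -(1/s^2) := by
          simp only [heq]
          have e : (1:ℝ)/s^2 = (1/s)^2 := by ring
          rw [e]
          nlinarith [mul_pos h3 hc, sq_nonneg c]
  have := main ⟨hεt₀, le_rfl⟩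
  linarith

/-- One-pair Oleinik step: `a` follows `b` with velocity `v(ℓ/(b-a))`,
`b` has velocity `w`.  If whenever the velocity-slope `z = (w - v(ℓ/(b-a)))/(b-a)`
exceeds `1/t` we have `ẇ ≤ (-(R v'(R))) z`, then `z ≤ 1/t`. -/
lemma oleinik_step
    (v : ℝ → ℝ) (hv : ContDiffOn ℝ 1 v (Set.Ici 0))
    (ℓ : ℝ) (hℓ : 0 < ℓ)
    (a b w W : ℝ → ℝ)
    (horder : ∀ t ≥ (0:ℝ), a t < b t)
    (ha : ∀ t ≥ (0:ℝ), HasDerivAt a (v (ℓ / (b t - a t))) t)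
    (hb : ∀ t ≥ (0:ℝ), HasDerivAt b (w t) t)
    (hw : ∀ t > (0:ℝ), HasDerivAt w (W t) t)
    (hw0 : ContinuousAt w 0)
    (hkey : ∀ t > (0:ℝ), 1/t ≤ (w t - v (ℓ / (b t - a t))) / (b t - a t) →
        W t ≤ (-((ℓ / (b t - a t)) * deriv v (ℓ / (b t - a t)))) *
          ((w t - v (ℓ / (b t - a t))) / (b t - a t))) :
    ∀ t > (0:ℝ), (w t - v (ℓ / (b t - a t))) / (b t - a t) ≤ 1/t := by
  have hvd : ∀ ρ : ℝ, 0 < ρ → HasDerivAt v (deriv v ρ) ρ := fun ρ hρ =>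
    (((hv.differentiableOn one_ne_zero).differentiableAt (Ici_mem_nhds hρ))).hasDerivAt
  have hy : ∀ t ≥ (0:ℝ), 0 < b t - a t := fun t ht => sub_pos.mpr (horder t ht)
  have hR : ∀ t ≥ (0:ℝ), 0 < ℓ / (b t - a t) := fun t ht => div_pos hℓ (hy t ht)
  set z : ℝ → ℝ := fun s => (w s - v (ℓ / (b s - a s))) / (b s - a s) with hzdef
  set Z : ℝ → ℝ := fun s =>
    ((W s - deriv v (ℓ / (b s - a s)) *
        ((0 * (b s - a s) - ℓ * (w s - v (ℓ / (b s - a s)))) / (b s - a s)^2)) * (b s - a s)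
      - (w s - v (ℓ / (b s - a s))) * (w s - v (ℓ / (b s - a s)))) / (b s - a s)^2 with hZdef
  have hyd : ∀ t ≥ (0:ℝ), HasDerivAt (fun s => b s - a s)
      (w t - v (ℓ / (b t - a t))) t := fun t ht => (hb t ht).sub (ha t ht)
  have hRd : ∀ t ≥ (0:ℝ), HasDerivAt (fun s => ℓ / (b s - a s))
      ((0 * (b t - a t) - ℓ * (w t - v (ℓ / (b t - a t)))) / (b t - a t)^2) t :=
    fun t ht => (hasDerivAt_const t ℓ).div (hyd t ht) (hy t ht).ne'
  have hvRd : ∀ t ≥ (0:ℝ), HasDerivAt (fun s => v (ℓ / (b s - a s)))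
      (deriv v (ℓ / (b t - a t)) *
        ((0 * (b t - a t) - ℓ * (w t - v (ℓ / (b t - a t)))) / (b t - a t)^2)) t :=
    fun t ht => (hvd _ (hR t ht)).comp t (hRd t ht)
  have hzd : ∀ t > (0:ℝ), HasDerivAt z (Z t) t := by
    intro t ht
    exact ((hw t ht).sub (hvRd t ht.le)).div (hyd t ht.le) (hy t ht.le).ne'
  have hz0 : ContinuousAt z 0 := by
    have hac : ContinuousAt a 0 := (ha 0 le_rfl).continuousAt
    have hbc : ContinuousAt b 0 := (hb 0 le_rfl).continuousAt
    have hyc : ContinuousAt (fun s => b s - a s) 0 := hbc.sub hac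
    have hRc : ContinuousAt (fun s => ℓ / (b s - a s)) 0 :=
      continuousAt_const.div hyc (hy 0 le_rfl).ne'
    have hvc : ContinuousAt v (ℓ / (b 0 - a 0)) :=
      hv.continuousOn.continuousAt (Ici_mem_nhds (hR 0 le_rfl))
    have hcomp : ContinuousAt (fun s => v (ℓ / (b s - a s))) 0 :=
      ContinuousAt.comp (g := v) hvc hRc
    exact ((hw0.sub hcomp).div hyc (hy 0 le_rfl).ne')
  refine oleinik_comp z Z hzd hz0 ?_
  intro t ht h1t
  have hW := hkey t ht h1t
  have hy' := hy t ht.le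
  set y := b t - a t
  set N := w t - v (ℓ / y)
  set d := deriv v (ℓ / y)
  -- Z t = (W t - d * (-ℓ N / y²)) y - N² all over y²; use hW
  have key2 : d * ((0 * y - ℓ * N) / y^2) = (-((ℓ / y) * d)) * (N / y) := by
    field_simp
    ring
  have h2 : W t - d * ((0 * y - ℓ * N) / y^2) ≤ 0 := by
    rw [key2]
    linarith [hW]
  show ((W t - d * ((0 * y - ℓ * N) / y^2)) * y - N * N) / y^2 ≤ -(N / y)^2
  have h3 : (W t - d * ((0 * y - ℓ * N) / y^2)) * y ≤ 0 :=
    mul_nonpos_of_nonpos_of_nonneg h2 hy'.le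
  have h4 : ((W t - d * ((0 * y - ℓ * N) / y^2)) * y - N * N) / y^2
      ≤ (0 - N * N) / y^2 := by
    apply div_le_div_of_nonneg_right ?_ (by positivity)
    · linarith
  calc ((W t - d * ((0 * y - ℓ * N) / y^2)) * y - N * N) / y^2
      ≤ (0 - N * N) / y^2 := h4
    _ = -(N / y)^2 := by field_simp; ring

/-- Discrete Oleinik inequality for the follow-the-leader system:
`(ẋ_{i+1}(t) - ẋᵢ(t))/(x_{i+1}(t) - xᵢ(t)) ≤ 1/t` for all `t > 0`. -/
theorem ftl_discrete_oleinik
    (v : ℝ → ℝ) (hv : ContDiffOn ℝ 1 v (Set.Ici 0))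
    (hv' : ∀ ρ : ℝ, 0 < ρ → deriv v ρ < 0)
    (hv2 : AntitoneOn (fun ρ => ρ * deriv v ρ) (Set.Ici 0))
    (ℓ : ℝ) (hℓ : 0 < ℓ) (n : ℕ) (hn : 3 ≤ n)
    (x : ℕ → ℝ → ℝ)
    (horder : ∀ t ≥ (0:ℝ), ∀ i, 1 ≤ i → i ≤ n - 2 → x i t < x (i+1) t)
    (hode : ∀ t ≥ (0:ℝ), ∀ i, 1 ≤ i → i ≤ n - 2 →
      HasDerivAt (x i) (v (ℓ / (x (i+1) t - x i t))) t)
    (hlead : ∀ t ≥ (0:ℝ), HasDerivAt (x (n-1)) (v 0) t) :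
    ∀ t : ℝ, 0 < t → ∀ i, 1 ≤ i → i ≤ n - 2 →
      (deriv (x (i+1)) t - deriv (x i) t) / (x (i+1) t - x i t) ≤ 1 / t := by
  have hvd : ∀ ρ : ℝ, 0 < ρ → HasDerivAt v (deriv v ρ) ρ := fun ρ hρ =>
    (((hv.differentiableOn one_ne_zero).differentiableAt (Ici_mem_nhds hρ))).hasDerivAt
  have hmono : AntitoneOn v (Ici 0) := by
    apply antitoneOn_of_deriv_nonpos (convex_Ici 0) hv.continuousOn
    · intro ρ hρ
      rw [interior_Ici] at hρ
      exact ((hv.differentiableOn one_ne_zero).differentiableAt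
        (Ici_mem_nhds hρ)).differentiableWithinAt
    · intro ρ hρ
      rw [interior_Ici] at hρ
      exact (hv' ρ hρ).le
  have e1 : n - 2 + 1 = n - 1 := by omega
  have hder : ∀ j, 1 ≤ j → j ≤ n - 1 → ∀ t ≥ (0:ℝ), HasDerivAt (x j) (deriv (x j) t) t := by
    intro j hj1 hj2 t ht
    rcases Nat.lt_or_ge j (n-1) with h | h
    · have hj : j ≤ n - 2 := by omega
      have H := hode t ht j hj1 hj
      rw [H.deriv]; exact H
    · have hj : j = n - 1 := by omega
      subst hj
      have H := hlead t ht
      rw [H.deriv]; exact H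
  have hdx : ∀ j, 1 ≤ j → j ≤ n - 2 → ∀ t ≥ (0:ℝ),
      deriv (x j) t = v (ℓ / (x (j+1) t - x j t)) :=
    fun j hj1 hj2 t ht => (hode t ht j hj1 hj2).deriv
  have hdlead : ∀ t ≥ (0:ℝ), deriv (x (n-1)) t = v 0 := fun t ht => (hlead t ht).deriv
  -- the leader pair `i = n-2`
  have leader : ∀ t : ℝ, 0 < t →
      (deriv (x (n-2+1)) t - deriv (x (n-2)) t) / (x (n-2+1) t - x (n-2) t) ≤ 1 / t := by
    have horder' : ∀ s ≥ (0:ℝ), x (n-2) s < x (n-1) s := by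
      intro s hs
      have := horder s hs (n-2) (by omega) le_rfl
      rwa [e1] at this
    have ha' : ∀ s ≥ (0:ℝ), HasDerivAt (x (n-2)) (v (ℓ / (x (n-1) s - x (n-2) s))) s := by
      intro s hs
      have := hode s hs (n-2) (by omega) le_rfl
      rwa [e1] at this
    intro t ht
    rw [e1, hdlead t ht.le]
    have hdx' : deriv (x (n-2)) t = v (ℓ / (x (n-1) t - x (n-2) t)) := by
      rw [hdx (n-2) (by omega) le_rfl t ht.le, e1]
    rw [hdx']
    refine oleinik_step v hv ℓ hℓ (x (n-2)) (x (n-1)) (fun _ => v 0) (fun _ => 0)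
      horder' ha' (fun s hs => hlead s hs) (fun s _ => hasDerivAt_const s _)
      continuousAt_const ?_ t ht
    intro s hs hzs
    have hys : 0 < x (n-1) s - x (n-2) s := sub_pos.2 (horder' s hs.le)
    have hRs : 0 < ℓ / (x (n-1) s - x (n-2) s) := div_pos hℓ hys
    have h5 : deriv v (ℓ / (x (n-1) s - x (n-2) s)) < 0 := hv' _ hRs
    have h6 : (0:ℝ) ≤ (v 0 - v (ℓ / (x (n-1) s - x (n-2) s))) / (x (n-1) s - x (n-2) s) := by
      have h7 : (0:ℝ) < 1/s := by positivity
      have hzs' : 1/s ≤ (v 0 - v (ℓ / (x (n-1) s - x (n-2) s))) / (x (n-1) s - x (n-2) s) := hzs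
      linarith
    show (0:ℝ) ≤ (-(ℓ / (x (n-1) s - x (n-2) s) * deriv v (ℓ / (x (n-1) s - x (n-2) s)))) *
      ((v 0 - v (ℓ / (x (n-1) s - x (n-2) s))) / (x (n-1) s - x (n-2) s))
    apply mul_nonneg _ h6
    nlinarith
  suffices key : ∀ m : ℕ, ∀ i, 1 ≤ i → i ≤ n - 2 → n - 2 - i ≤ m →
      ∀ t : ℝ, 0 < t → (deriv (x (i+1)) t - deriv (x i) t) / (x (i+1) t - x i t) ≤ 1 / t by
    intro t ht i h1 h2
    exact key (n - 2 - i) i h1 h2 le_rfl t ht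
  intro m
  induction m with
  | zero =>
    intro i h1 h2 h3 t ht
    have hi : i = n - 2 := by omega
    subst hi
    exact leader t ht
  | succ m ih =>
    intro i h1 h2 h3 t ht
    by_cases hi : i = n - 2
    · subst hi
      exact leader t ht
    · have hii : i + 1 ≤ n - 2 := by omega
      rw [hdx (i+1) (by omega) hii t ht.le, hdx i h1 h2 t ht.le]
      have horder2 : ∀ s ≥ (0:ℝ), x (i+1) s < x (i+1+1) s :=
        fun s hs => horder s hs (i+1) (by omega) hii
      have hy2 : ∀ s ≥ (0:ℝ), 0 < x (i+1+1) s - x (i+1) s :=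
        fun s hs => sub_pos.2 (horder2 s hs)
      refine oleinik_step v hv ℓ hℓ (x i) (x (i+1))
        (fun s => v (ℓ / (x (i+1+1) s - x (i+1) s)))
        (fun s => deriv v (ℓ / (x (i+1+1) s - x (i+1) s)) *
          ((0 * (x (i+1+1) s - x (i+1) s) -
            ℓ * (deriv (x (i+1+1)) s - v (ℓ / (x (i+1+1) s - x (i+1) s)))) /
            (x (i+1+1) s - x (i+1) s)^2))
        (fun s hs => horder s hs i h1 h2)
        (fun s hs => hode s hs i h1 h2)
        (fun s hs => hode s hs (i+1) (by omega) hii)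
        ?_ ?_ ?_ t ht
      · -- derivative of w
        intro s hs
        have h2d := hder (i+1+1) (by omega) (by omega) s hs.le
        have h1d := hode s hs.le (i+1) (by omega) hii
        have hyd2 : HasDerivAt (fun r => x (i+1+1) r - x (i+1) r)
            (deriv (x (i+1+1)) s - v (ℓ / (x (i+1+1) s - x (i+1) s))) s := h2d.sub h1d
        have hRd2 := (hasDerivAt_const s ℓ).div hyd2 (hy2 s hs.le).ne'
        exact (hvd _ (div_pos hℓ (hy2 s hs.le))).comp s hRd2
      · -- continuity of w at 0
        have hRc : ContinuousAt (fun s => ℓ / (x (i+1+1) s - x (i+1) s)) 0 :=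
          continuousAt_const.div
            (((hder (i+1+1) (by omega) (by omega) 0 le_rfl).continuousAt).sub
              ((hode 0 le_rfl (i+1) (by omega) hii).continuousAt))
            (hy2 0 le_rfl).ne'
        exact ContinuousAt.comp (g := v)
          (hv.continuousOn.continuousAt (Ici_mem_nhds (div_pos hℓ (hy2 0 le_rfl)))) hRc
      · -- hkey
        intro s hs hzs
        have hy1 : 0 < x (i+1) s - x i s := sub_pos.2 (horder s hs.le i h1 h2)
        have hy2' : 0 < x (i+1+1) s - x (i+1) s := hy2 s hs.le
        have hR1 : 0 < ℓ / (x (i+1) s - x i s) := div_pos hℓ hy1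
        have hR2 : 0 < ℓ / (x (i+1+1) s - x (i+1) s) := div_pos hℓ hy2'
        have hzs' : 1/s ≤ (v (ℓ / (x (i+1+1) s - x (i+1) s)) - v (ℓ / (x (i+1) s - x i s)))
            / (x (i+1) s - x i s) := hzs
        -- the numerator is positive
        have hnum : 0 < v (ℓ / (x (i+1+1) s - x (i+1) s)) - v (ℓ / (x (i+1) s - x i s)) := by
          have e := div_mul_cancel₀
            (v (ℓ / (x (i+1+1) s - x (i+1) s)) - v (ℓ / (x (i+1) s - x i s))) hy1.ne'
          have h7 := mul_le_mul_of_nonneg_right hzs' hy1.le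
          rw [e] at h7
          have h8 : 0 < 1/s * (x (i+1) s - x i s) := by positivity
          linarith
        -- densities are ordered
        have hlt : ℓ / (x (i+1+1) s - x (i+1) s) < ℓ / (x (i+1) s - x i s) := by
          by_contra hcon
          push_neg at hcon
          have := hmono hR1.le hR2.le hcon
          linarith
        have hA := hv2 hR2.le hR1.le hlt.le
        have ha1 : 0 ≤ -(ℓ / (x (i+1) s - x i s) * deriv v (ℓ / (x (i+1) s - x i s))) := by
          nlinarith [hv' _ hR1]
        have ha2 : 0 ≤ -(ℓ / (x (i+1+1) s - x (i+1) s) *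
            deriv v (ℓ / (x (i+1+1) s - x (i+1) s))) := by
          nlinarith [hv' _ hR2]
        -- induction hypothesis: slope at the next pair is ≤ 1/s
        have hIH := ih (i+1) (by omega) hii (by omega) s hs
        rw [hdx (i+1) (by omega) hii s hs.le] at hIH
        -- rewrite W s
        have key2 : deriv v (ℓ / (x (i+1+1) s - x (i+1) s)) *
            ((0 * (x (i+1+1) s - x (i+1) s) -
              ℓ * (deriv (x (i+1+1)) s - v (ℓ / (x (i+1+1) s - x (i+1) s)))) /
              (x (i+1+1) s - x (i+1) s)^2)
            = (-(ℓ / (x (i+1+1) s - x (i+1) s) * deriv v (ℓ / (x (i+1+1) s - x (i+1) s)))) *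
              ((deriv (x (i+1+1)) s - v (ℓ / (x (i+1+1) s - x (i+1) s)))
                / (x (i+1+1) s - x (i+1) s)) := by
          field_simp
          ring
        have hfin : deriv v (ℓ / (x (i+1+1) s - x (i+1) s)) *
            ((0 * (x (i+1+1) s - x (i+1) s) -
              ℓ * (deriv (x (i+1+1)) s - v (ℓ / (x (i+1+1) s - x (i+1) s)))) /
              (x (i+1+1) s - x (i+1) s)^2)
            ≤ (-(ℓ / (x (i+1) s - x i s) * deriv v (ℓ / (x (i+1) s - x i s)))) *
              ((v (ℓ / (x (i+1+1) s - x (i+1) s)) - v (ℓ / (x (i+1) s - x i s)))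
                / (x (i+1) s - x i s)) := by
          rw [key2]
          calc (-(ℓ / (x (i+1+1) s - x (i+1) s) * deriv v (ℓ / (x (i+1+1) s - x (i+1) s)))) *
              ((deriv (x (i+1+1)) s - v (ℓ / (x (i+1+1) s - x (i+1) s)))
                / (x (i+1+1) s - x (i+1) s))
              ≤ (-(ℓ / (x (i+1+1) s - x (i+1) s) *
                  deriv v (ℓ / (x (i+1+1) s - x (i+1) s)))) * (1/s) :=
                mul_le_mul_of_nonneg_left hIH ha2
            _ ≤ (-(ℓ / (x (i+1) s - x i s) * deriv v (ℓ / (x (i+1) s - x i s)))) * (1/s) := by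
                apply mul_le_mul_of_nonneg_right _ (by positivity)
                linarith
            _ ≤ (-(ℓ / (x (i+1) s - x i s) * deriv v (ℓ / (x (i+1) s - x i s)))) *
                ((v (ℓ / (x (i+1+1) s - x (i+1) s)) - v (ℓ / (x (i+1) s - x i s)))
                  / (x (i+1) s - x i s)) :=
                mul_le_mul_of_nonneg_left hzs' ha1
        exact hfin
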